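/- Let x be an infinite word over a finite alphabet and let α ≥ 1. If the subshift Ω(x) is α-repulsive (i.e., ℓ_α is finite and nonzero), then Q_α := limsup_{n→∞} Q(n)/n^{α−1} < ∞. -/

import Mathlib

open Filter ENNReal

/-- The left shift on infinite words. -/
def shft {A : Type*} (y : ℕ → A) : ℕ → A := fun n => y (n + 1)

/-- `w` occurs as a factor of the infinite word `y`. -/
def FactorOf {A : Type*} (w : List A) (y : ℕ → A) : Prop :=
  ∃ k, w = (List.range w.length).map fun i => y (k + i)

/-- The language of a subshift `Y`: all finite factors of elements of `Y`. -/
def LangOf {A : Type*} (Y : Set (ℕ → A)) : Set (List A) :=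
  {w | ∃ y ∈ Y, FactorOf w y}

/-- The language of an infinite word `x`: all finite factors of `x`
(equals the language of the subshift `Ω(x)` generated by `x`). -/
def LangX {A : Type*} (x : ℕ → A) : Set (List A) :=
  {w | FactorOf w x}

/-- A subshift: a closed, shift-invariant set of infinite words. -/
def IsSubshift {A : Type*} [TopologicalSpace A] (Y : Set (ℕ → A)) : Prop :=
  IsClosed Y ∧ shft '' Y = Y

/-- The subshift generated by an infinite word `x`: the closure of its shift orbit. -/
def OmegaOf {A : Type*} [TopologicalSpace A] (x : ℕ → A) : Set (ℕ → A) :=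
  closure {y | ∃ k, y = shft^[k] x}

/-- `Y` is aperiodic: it contains no periodic point. -/
def Aperiodic {A : Type*} (Y : Set (ℕ → A)) : Prop :=
  ¬ ∃ y ∈ Y, ∃ k, 0 < k ∧ shft^[k] y = y

/-- `Q(n)`: the supremum of the powers `p` such that some word `W` of length `n`
in the language `L` has `W^p ∈ L`. -/
noncomputable def QfunL {A : Type*} (L : Set (List A)) (n : ℕ) : ℕ∞ :=
  sSup ((fun q : ℕ => (q : ℕ∞)) ''
    {q | ∃ W ∈ L, W.length = n ∧ (List.replicate q W).flatten ∈ L})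

/-- The repetitive function `R(n)`: the smallest `r'` such that every word of
length `r'` in `L` contains all words of `L` of length `n` as factors
(`⊤` if no such `r'` exists). -/
noncomputable def RfunL {A : Type*} (L : Set (List A)) (n : ℕ) : ℕ∞ :=
  sInf ((fun r : ℕ => (r : ℕ∞)) ''
    {r' | ∀ u ∈ L, u.length = r' → ∀ v ∈ L, v.length = n → v <:+: u})

/-- `Q_α = limsup Q(n)/n^(α-1)`. -/
noncomputable def Qalpha {A : Type*} (L : Set (List A)) (α : ℝ) : ℝ≥0∞ :=
  Filter.atTop.limsup fun n : ℕ => (QfunL L n : ℝ≥0∞) / (n : ℝ≥0∞) ^ (α - 1)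

/-- `R_α = limsup R(n)/n^α`. -/
noncomputable def Ralpha {A : Type*} (L : Set (List A)) (α : ℝ) : ℝ≥0∞ :=
  Filter.atTop.limsup fun n : ℕ => (RfunL L n : ℝ≥0∞) / (n : ℝ≥0∞) ^ α

/-- `A_{α,n}`: the infimum of `(|W|-|w|)/|w|^(1/α)` over `w, W` in the language with
`w` a proper nonempty prefix and suffix of `W` and `|W| = n`. -/
noncomputable def AfunL {A : Type*} (L : Set (List A)) (α : ℝ) (n : ℕ) : ℝ≥0∞ :=
  sInf {t | ∃ w W : List A, w ∈ L ∧ W ∈ L ∧ w ≠ [] ∧ w ≠ W ∧ w <+: W ∧ w <:+ W ∧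
    W.length = n ∧ t = ((W.length - w.length : ℕ) : ℝ≥0∞) / (w.length : ℝ≥0∞) ^ (1 / α)}

/-- `ℓ_α = liminf_n A_{α,n}`. -/
noncomputable def lalpha {A : Type*} (L : Set (List A)) (α : ℝ) : ℝ≥0∞ :=
  Filter.atTop.liminf (AfunL L α)

/-- `ℓ`: the repulsiveness constant (no restriction on `|W|`). -/
noncomputable def lconst {A : Type*} (L : Set (List A)) : ℝ≥0∞ :=
  sInf {t | ∃ w W : List A, w ∈ L ∧ W ∈ L ∧ w ≠ [] ∧ w ≠ W ∧ w <+: W ∧ w <:+ W ∧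
    t = ((W.length - w.length : ℕ) : ℝ≥0∞) / (w.length : ℝ≥0∞)}


private lemma word_append' {A : Type*} (x : ℕ → A) (k m n : ℕ) :
    ((List.range (m + n)).map fun i => x (k + i)) =
      ((List.range m).map fun i => x (k + i)) ++
        ((List.range n).map fun i => x (k + m + i)) := by
  rw [List.range_add, List.map_append, List.map_map]
  congr 1
  apply List.map_congr_left
  intro i _
  simp [Function.comp]
  ring_nf

private lemma langX_of_infix {A : Type*} {x : ℕ → A} {u w : List A}
    (hw : w ∈ LangX x) (h : u <:+: w) : u ∈ LangX x := by
  obtain ⟨k, hk⟩ := hw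
  obtain ⟨s, t, hst⟩ := h
  have hlen : w.length = s.length + (u.length + t.length) := by
    rw [← hst]; simp [List.length_append]
  rw [hlen, word_append', word_append'] at hk
  rw [List.append_assoc] at hst
  have h1 := List.append_inj (hst.trans hk) (by simp)
  have h2 := List.append_inj h1.2 (by simp)
  exact ⟨k + s.length, h2.1⟩

private lemma exists_gt_of_lt_QfunL {A : Type*} {L : Set (List A)} {n : ℕ} {b : ℝ≥0∞}
    (hb : b ≠ ⊤) (h : b < (QfunL L n : ℝ≥0∞)) :
    ∃ q : ℕ, (∃ W ∈ L, W.length = n ∧ (List.replicate q W).flatten ∈ L) ∧ b < (q : ℝ≥0∞) := by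
  set k := ⌊b.toReal⌋₊ with hk
  have hkb : (k : ℝ≥0∞) ≤ b := by
    rw [← ENNReal.ofReal_natCast, ← ENNReal.ofReal_toReal hb]
    exact ENNReal.ofReal_le_ofReal (Nat.floor_le ENNReal.toReal_nonneg)
  have h2 : ((k : ℕ∞) : ℝ≥0∞) < (QfunL L n : ℝ≥0∞) := by
    rw [ENat.toENNReal_coe]; exact lt_of_le_of_lt hkb h
  have h3 : (k : ℕ∞) < QfunL L n := ENat.toENNReal_lt.mp h2
  rw [QfunL, lt_sSup_iff] at h3
  obtain ⟨a, ⟨q, hq, rfl⟩, hlt⟩ := h3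
  refine ⟨q, hq, ?_⟩
  have hkq : k < q := by simp only [] at hlt; exact_mod_cast hlt
  have h4 : b < ((k + 1 : ℕ) : ℝ≥0∞) := by
    rw [← ENNReal.ofReal_natCast, ← ENNReal.ofReal_toReal hb]
    rw [ENNReal.ofReal_lt_ofReal_iff (by positivity)]
    push_cast
    exact Nat.lt_floor_add_one _
  exact h4.trans_le (by exact_mod_cast hkq)

/-- If `Ω(x)` is `α`-repulsive (`0 < ℓ_α < ∞`) for `α ≥ 1`, then
`Q_α = limsup Q(n)/n^(α-1) < ∞`. -/
theorem Qalpha_lt_top_of_repulsive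
    {A : Type*} [Finite A] (x : ℕ → A) (α : ℝ) (hα : 1 ≤ α)
    (hrep : lalpha (LangX x) α ≠ 0 ∧ lalpha (LangX x) α ≠ ⊤) :
    Qalpha (LangX x) α ≠ ⊤ := by
  obtain ⟨h0, htop⟩ := hrep
  set L := LangX x with hL
  have hα0 : (0:ℝ) < α := lt_of_lt_of_le one_pos hα
  set c : ℝ≥0∞ := lalpha L α / 2 with hcdef
  have hclt : c < lalpha L α := ENNReal.half_lt_self h0 htop
  have hc0 : c ≠ 0 := by
    simp only [hcdef, ne_eq, ENNReal.div_eq_zero_iff]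
    push_neg; exact ⟨h0, by norm_num⟩
  have hcT : c ≠ ⊤ := ne_top_of_le_ne_top htop (ENNReal.half_le_self)
  have hca0 : c ^ α ≠ 0 := (ENNReal.rpow_pos (pos_iff_ne_zero.mpr hc0) hcT).ne'
  have hcaT : c ^ α ≠ ⊤ := ENNReal.rpow_ne_top_of_nonneg hα0.le hcT
  have hicaT : 1 / c ^ α ≠ ⊤ := by simp [ENNReal.div_eq_top, hca0]
  have hev : ∀ᶠ m in atTop, c < AfunL L α m := eventually_lt_of_lt_liminf hclt
  obtain ⟨N, hN⟩ := eventually_atTop.mp hev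
  set M : ℝ≥0∞ := 1 / c ^ α + (N : ℝ≥0∞) + 2 with hMdef
  have hMT : M ≠ ⊤ := by
    rw [hMdef]
    exact ENNReal.add_ne_top.mpr
      ⟨ENNReal.add_ne_top.mpr ⟨hicaT, ENNReal.natCast_ne_top N⟩, by norm_num⟩
  refine ne_top_of_le_ne_top hMT ?_
  rw [Qalpha]
  refine Filter.limsup_le_of_le (by isBoundedDefault) ?_
  filter_upwards [Filter.eventually_ge_atTop 1] with n hn1
  by_contra hgt
  push_neg at hgt
  set d : ℝ≥0∞ := (n : ℝ≥0∞) ^ (α - 1) with hddef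
  have hnn0 : (n : ℝ≥0∞) ≠ 0 := Nat.cast_ne_zero.mpr (by omega)
  have hnnT : (n : ℝ≥0∞) ≠ ⊤ := ENNReal.natCast_ne_top n
  have hnn1 : (1:ℝ≥0∞) ≤ (n : ℝ≥0∞) := by exact_mod_cast hn1
  have hd0 : d ≠ 0 := (ENNReal.rpow_pos (pos_iff_ne_zero.mpr hnn0) hnnT).ne'
  have hdT : d ≠ ⊤ := ENNReal.rpow_ne_top_of_nonneg (by linarith) hnnT
  have hd1 : (1:ℝ≥0∞) ≤ d := by
    have := ENNReal.rpow_le_rpow_of_exponent_le hnn1 (show (0:ℝ) ≤ α - 1 by linarith)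
    rwa [ENNReal.rpow_zero] at this
  have hMd : M * d < (QfunL L n : ℝ≥0∞) :=
    (ENNReal.lt_div_iff_mul_lt (Or.inl hd0) (Or.inl hdT)).mp hgt
  obtain ⟨q, ⟨W, hWL, hWlen, hWq⟩, hq⟩ :=
    exists_gt_of_lt_QfunL (mul_ne_top hMT hdT) hMd
  have hMleMd : M ≤ M * d := le_mul_of_one_le_right' hd1
  have h2M : (2:ℝ≥0∞) ≤ M := by rw [hMdef]; exact le_add_self
  have hq2 : (2:ℕ) < q := by
    have : (2:ℝ≥0∞) < (q:ℝ≥0∞) := lt_of_le_of_lt (h2M.trans hMleMd) hq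
    exact_mod_cast this
  have hNq : N < q := by
    have hNM : (N:ℝ≥0∞) ≤ M := by
      rw [hMdef]
      calc (N:ℝ≥0∞) ≤ 1 / c ^ α + (N:ℝ≥0∞) := le_add_self
        _ ≤ 1 / c ^ α + (N:ℝ≥0∞) + 2 := le_self_add
    have : (N:ℝ≥0∞) < (q:ℝ≥0∞) := lt_of_le_of_lt (hNM.trans hMleMd) hq
    exact_mod_cast this
  set P : ℝ≥0∞ := ((q - 1 : ℕ) : ℝ≥0∞) with hPdef
  have hPq : P + 1 = (q : ℝ≥0∞) := by
    have h' : q - 1 + 1 = q := by omega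
    rw [hPdef]
    exact_mod_cast congrArg (fun m : ℕ => (m : ℝ≥0∞)) h'
  have hkey : 1 / c ^ α * d < P := by
    have hone : (1:ℝ≥0∞) ≤ ((N:ℝ≥0∞) + 2) * d := by
      calc (1:ℝ≥0∞) = 1 * 1 := (one_mul 1).symm
        _ ≤ ((N:ℝ≥0∞) + 2) * d :=
          mul_le_mul' ((by norm_num : (1:ℝ≥0∞) ≤ 2).trans le_add_self) hd1
    have h5 : 1 / c ^ α * d + 1 < P + 1 := by
      rw [hPq]
      refine lt_of_le_of_lt ?_ hq
      calc 1 / c ^ α * d + 1 ≤ 1 / c ^ α * d + ((N:ℝ≥0∞) + 2) * d := add_le_add (le_refl _) hone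
        _ = M * d := by rw [hMdef]; ring
    exact (ENNReal.add_lt_add_iff_right one_ne_top).mp h5
  have hP0 : P ≠ 0 := by
    rw [hPdef]; exact_mod_cast (by omega : q - 1 ≠ 0)
  have hPT : P ≠ ⊤ := ENNReal.natCast_ne_top _
  set Wbig := (List.replicate q W).flatten with hWbig
  set w := (List.replicate (q - 1) W).flatten with hw
  have hq1 : q - 1 + 1 = q := by omega
  have hmul : q * n = (q - 1) * n + n := by
    conv_lhs => rw [← hq1]
    rw [Nat.succ_mul]
  have hlenW : Wbig.length = q * n := by
    simp [hWbig, List.length_flatten, hWlen]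
  have hlenw : w.length = (q - 1) * n := by
    simp [hw, List.length_flatten, hWlen]
  have hpre : w <+: Wbig := by
    refine ⟨W, ?_⟩
    rw [hWbig, hw, ← hq1, List.replicate_succ', List.flatten_append]
    simp
  have hsuf : w <:+ Wbig := by
    refine ⟨W, ?_⟩
    rw [hWbig, hw]
    conv_rhs => rw [← hq1]
    rw [List.replicate_succ, List.flatten_cons]
  have hwL : w ∈ L := langX_of_infix hWq hpre.isInfix
  have hwne : w ≠ [] := by
    apply List.ne_nil_of_length_pos
    rw [hlenw]
    exact Nat.mul_pos (by omega) (by omega)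
  have hwW : w ≠ Wbig := by
    intro hcon
    have : w.length = Wbig.length := by rw [hcon]
    rw [hlenw, hlenW, hmul, left_eq_add] at this
    omega
  have hinf : AfunL L α (q * n) ≤
      ((Wbig.length - w.length : ℕ) : ℝ≥0∞) / (w.length : ℝ≥0∞) ^ (1 / α) :=
    sInf_le ⟨w, Wbig, hwL, hWq, hwne, hwW, hpre, hsuf, hlenW, rfl⟩
  have hsub : Wbig.length - w.length = n := by
    rw [hlenW, hlenw, hmul]
    exact Nat.add_sub_cancel_left _ _
  have hwlen' : ((w.length : ℕ) : ℝ≥0∞) = P * (n : ℝ≥0∞) := by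
    rw [hlenw, hPdef]; push_cast; ring
  have hbound : ((Wbig.length - w.length : ℕ) : ℝ≥0∞) / (w.length : ℝ≥0∞) ^ (1 / α) < c := by
    rw [hsub, hwlen']
    have hPn0 : P * (n:ℝ≥0∞) ≠ 0 := mul_ne_zero hP0 hnn0
    have hPnT : P * (n:ℝ≥0∞) ≠ ⊤ := mul_ne_top hPT hnnT
    have hr0 : (P * (n:ℝ≥0∞)) ^ (1/α) ≠ 0 :=
      (ENNReal.rpow_pos (pos_iff_ne_zero.mpr hPn0) hPnT).ne'
    have hrT : (P * (n:ℝ≥0∞)) ^ (1/α) ≠ ⊤ :=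
      ENNReal.rpow_ne_top_of_nonneg (by positivity) hPnT
    rw [ENNReal.div_lt_iff (Or.inl hr0) (Or.inl hrT)]
    have step1 : d < c ^ α * P := by
      have h6 := ENNReal.mul_lt_mul_right hca0 hcaT hkey
      rwa [← mul_assoc, one_div, ENNReal.mul_inv_cancel hca0 hcaT, one_mul] at h6
    have step2 : d * (n:ℝ≥0∞) < c ^ α * P * (n:ℝ≥0∞) :=
      ENNReal.mul_lt_mul_left hnn0 hnnT step1
    have step3 : d * (n:ℝ≥0∞) = (n:ℝ≥0∞) ^ α := by
      rw [hddef]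
      calc (n:ℝ≥0∞) ^ (α-1) * (n:ℝ≥0∞) = (n:ℝ≥0∞) ^ (α-1) * (n:ℝ≥0∞) ^ (1:ℝ) := by
            rw [ENNReal.rpow_one]
        _ = (n:ℝ≥0∞) ^ (α - 1 + 1) := (ENNReal.rpow_add _ _ hnn0 hnnT).symm
        _ = (n:ℝ≥0∞) ^ α := by ring_nf
    have step4 : (n:ℝ≥0∞) ^ α < c ^ α * (P * (n:ℝ≥0∞)) := by
      rw [← step3, ← mul_assoc]; exact step2
    have step5 := ENNReal.rpow_lt_rpow step4 (by positivity : (0:ℝ) < 1/α)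
    rw [← ENNReal.rpow_mul, mul_one_div_cancel hα0.ne', ENNReal.rpow_one,
      ENNReal.mul_rpow_of_ne_top hcaT hPnT, ← ENNReal.rpow_mul,
      mul_one_div_cancel hα0.ne', ENNReal.rpow_one] at step5
    exact step5
  have hcA := hN (q * n) (le_trans (le_of_lt hNq) (Nat.le_mul_of_pos_right q (by omega)))
  exact absurd (lt_of_lt_of_le hcA hinf) (not_lt.mpr hbound.le)
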